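/- Let p be a prime with 4 dividing p−1, let λ be an element of order 4 in (ℤ/pℤ)ˣ, and let k ∈ ℤ/pℤ. Then the assignment a ↦ a⁻¹, b ↦ b⁻¹, c ↦ c extends to an automorphism σ of G_2(p) satisfying σ(R_{4,k}) = (R_{4,1+λ−k})⁻¹; consequently σ(S_{4,k}) = S_{4,1+λ−k} and the Cayley graphs Cay(G_2(p), S_{4,k}) and Cay(G_2(p), S_{4,1+λ−k}) are isomorphic. -/

import Mathlib

/-- The Cayley graph of a group `G` with respect to a subset `S`:
vertices are the elements of `G`, and `x`, `y` are adjacent iff `y * x⁻¹ ∈ S`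
(symmetrized; when `S = S⁻¹` and `1 ∉ S` this is the usual Cayley graph). -/
def Cay (G : Type*) [Group G] (S : Set G) : SimpleGraph G where
  Adj x y := x ≠ y ∧ (y * x⁻¹ ∈ S ∨ x * y⁻¹ ∈ S)
  symm := ⟨fun x y h => ⟨h.1.symm, h.2.symm⟩⟩
  loopless := ⟨fun x h => h.1 rfl⟩

namespace SimpleGraph
variable {V : Type*} (Γ : SimpleGraph V)

/-- The automorphism group acts transitively on vertices. -/
def VertexTransitive : Prop := ∀ u v : V, ∃ f : Γ ≃g Γ, f u = v

/-- The automorphism group acts transitively on (undirected) edges. -/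
def EdgeTransitive : Prop :=
  ∀ e₁ ∈ Γ.edgeSet, ∀ e₂ ∈ Γ.edgeSet, ∃ f : Γ ≃g Γ, Sym2.map f e₁ = e₂

/-- The automorphism group acts transitively on arcs (ordered pairs of adjacent vertices). -/
def ArcTransitive : Prop :=
  ∀ u v x y : V, Γ.Adj u v → Γ.Adj x y → ∃ f : Γ ≃g Γ, f u = x ∧ f v = y

/-- A graph is half-arc-transitive if it is vertex- and edge- but not arc-transitive. -/
def HalfArcTransitive : Prop :=
  Γ.VertexTransitive ∧ Γ.EdgeTransitive ∧ ¬ Γ.ArcTransitive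

end SimpleGraph

/-- The right regular representation `Ĝ = {x ↦ x * g | g ∈ G}` as a subgroup of the
automorphism group of the Cayley graph `Cay G S`. -/
def rightRegular (G : Type*) [Group G] (S : Set G) :
    Subgroup ((Cay G S) ≃g (Cay G S)) where
  carrier := {f | ∃ g : G, ∀ x, f x = x * g}
  one_mem' := ⟨1, fun x => (mul_one x).symm⟩
  mul_mem' := by
    rintro f f' ⟨g, hg⟩ ⟨g', hg'⟩
    exact ⟨g' * g, fun x => by
      show f (f' x) = x * (g' * g)
      rw [hg', hg, mul_assoc]⟩
  inv_mem' := by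
    rintro f ⟨g, hg⟩
    refine ⟨g⁻¹, fun x => ?_⟩
    show f.symm x = x * g⁻¹
    have h1 : f (x * g⁻¹) = x := by rw [hg, inv_mul_cancel_right]
    have h2 : f.symm (f (x * g⁻¹)) = x * g⁻¹ := RelIso.symm_apply_apply f _
    rw [h1] at h2
    exact h2

/-- A Cayley graph is *normal* if the right regular representation is a normal subgroup
of its full automorphism group. -/
def CayleyNormal (G : Type*) [Group G] (S : Set G) : Prop :=
  (rightRegular G S).Normal

/-- `Aut(G, S)`: the group of automorphisms of `G` preserving the subset `S` setwise. -/
def autStab (G : Type*) [Group G] (S : Set G) : Subgroup (MulAut G) where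
  carrier := {α | α '' S = S}
  one_mem' := by simp
  mul_mem' := by
    intro α β hα hβ
    show (α * β) '' S = S
    have : ⇑(α * β) = ⇑α ∘ ⇑β := rfl
    rw [this, Set.image_comp, hβ, hα]
  inv_mem' := by
    intro α hα
    show ⇑α⁻¹ '' S = S
    conv_lhs => rw [← hα]
    rw [← Set.image_comp]
    have : ⇑α⁻¹ ∘ ⇑α = id := by
      funext x
      exact α.symm_apply_apply x
    rw [this, Set.image_id]

/-- The setoid on an index set identifying indices with isomorphic graphs. -/
def graphIsoSetoid {ι V : Type*} (F : ι → SimpleGraph V) : Setoid ι where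
  r k l := Nonempty (F k ≃g F l)
  iseqv := ⟨fun _ => ⟨RelIso.refl _⟩, fun ⟨f⟩ => ⟨f.symm⟩, fun ⟨f⟩ ⟨g⟩ => ⟨f.trans g⟩⟩
/-- Relations for the group `G₁(p) = ⟨a, b | a^(p²) = 1, b^p = 1, b⁻¹ a b = a^(1+p)⟩`. -/
def G1Rels (p : ℕ) : Set (FreeGroup (Fin 2)) :=
  {FreeGroup.of 0 ^ (p ^ 2), FreeGroup.of 1 ^ p,
    (FreeGroup.of 1)⁻¹ * FreeGroup.of 0 * FreeGroup.of 1 * (FreeGroup.of 0 ^ (1 + p))⁻¹}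

/-- The nonabelian metacyclic group of order `p³`. -/
abbrev G1 (p : ℕ) : Type := PresentedGroup (G1Rels p)

/-- The generator `a` of `G₁(p)`. -/
def a1 (p : ℕ) : G1 p := PresentedGroup.of 0

/-- The generator `b` of `G₁(p)`. -/
def b1 (p : ℕ) : G1 p := PresentedGroup.of 1

/-- The connection set `T^{j,k} = {b^k a^(e^i), (b^k a^(e^i))⁻¹ : 0 ≤ i ≤ j-1} ⊆ G₁(p)`,
where `e` is a unit of `ℤ/p²ℤ` (of order `j`). -/
def Tset (p : ℕ) (e : (ZMod (p ^ 2))ˣ) (j k : ℕ) : Set (G1 p) :=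
  ((fun i : ℕ => b1 p ^ k * a1 p ^ ((e ^ i : (ZMod (p ^ 2))ˣ) : ZMod (p ^ 2)).val) ''
      Set.Iio j) ∪
  ((fun i : ℕ => b1 p ^ k * a1 p ^ ((e ^ i : (ZMod (p ^ 2))ˣ) : ZMod (p ^ 2)).val) ''
      Set.Iio j)⁻¹

open scoped commutatorElement in
/-- Relations for the Heisenberg group
`G₂(p) = ⟨a, b, c | a^p = b^p = c^p = 1, [a,b] = c, [a,c] = [b,c] = 1⟩`. -/
def G2Rels (p : ℕ) : Set (FreeGroup (Fin 3)) :=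
  {FreeGroup.of 0 ^ p, FreeGroup.of 1 ^ p, FreeGroup.of 2 ^ p,
    ⁅FreeGroup.of (0 : Fin 3), FreeGroup.of 1⁆ * (FreeGroup.of 2)⁻¹,
    ⁅FreeGroup.of (0 : Fin 3), FreeGroup.of 2⁆, ⁅FreeGroup.of (1 : Fin 3), FreeGroup.of 2⁆}

/-- The nonabelian group of order `p³` and exponent `p`. -/
abbrev G2 (p : ℕ) : Type := PresentedGroup (G2Rels p)

/-- The generator `a` of `G₂(p)`. -/
def a2 (p : ℕ) : G2 p := PresentedGroup.of 0

/-- The generator `b` of `G₂(p)`. -/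
def b2 (p : ℕ) : G2 p := PresentedGroup.of 1

/-- The generator `c = [a,b]` of `G₂(p)`. -/
def c2 (p : ℕ) : G2 p := PresentedGroup.of 2

/-- Power of an element of `G₂(p)` by an exponent in `ℤ/pℤ` (well defined as every
element of `G₂(p)` has order dividing `p`). -/
def pw {p : ℕ} (x : G2 p) (n : ZMod p) : G2 p := x ^ n.val

/-- `R_{4,k} = {a, b, a^λ b^(λ-1) c^k, a^(-λ-1) b^(-λ) c^(1-k)} ⊆ G₂(p)`. -/
def R4 (p : ℕ) (lam k : ZMod p) : Set (G2 p) :=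
  {a2 p, b2 p,
    pw (a2 p) lam * pw (b2 p) (lam - 1) * pw (c2 p) k,
    pw (a2 p) (-lam - 1) * pw (b2 p) (-lam) * pw (c2 p) (1 - k)}

/-- `S_{4,k} = R_{4,k} ∪ R_{4,k}⁻¹ ⊆ G₂(p)`. -/
def S4 (p : ℕ) (lam k : ZMod p) : Set (G2 p) :=
  R4 p lam k ∪ (R4 p lam k)⁻¹


section AuxPw

lemma mulaut_image_inv {G : Type*} [Group G] (σ : MulAut G) (s : Set G) :
    ⇑σ '' s⁻¹ = (⇑σ '' s)⁻¹ := by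
  ext g
  simp only [Set.mem_inv, Set.mem_image]
  constructor
  · rintro ⟨y, hy, rfl⟩
    exact ⟨y⁻¹, hy, map_inv σ y⟩
  · rintro ⟨y, hy, hyg⟩
    exact ⟨y⁻¹, by simpa using hy, by rw [map_inv, hyg, inv_inv]⟩

variable {p : ℕ} [NeZero p] {x : G2 p}

lemma pow_zmod_congr {G : Type*} [Group G] {x : G} (hx : x ^ p = 1) {m n : ℕ}
    (h : (m : ZMod p) = (n : ZMod p)) : x ^ m = x ^ n :=
  pow_eq_pow_iff_modEq.mpr (((ZMod.natCast_eq_natCast_iff m n p).mp h).of_dvd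
    (orderOf_dvd_of_pow_eq_one hx))

lemma pw_zero : pw x (0 : ZMod p) = 1 := by simp [pw, ZMod.val_zero]

lemma pw_add (hx : x ^ p = 1) (m n : ZMod p) : pw x (m + n) = pw x m * pw x n := by
  rw [pw, pw, pw, ← pow_add]
  exact pow_zmod_congr hx (by push_cast [ZMod.natCast_val, ZMod.cast_id]; ring)

lemma pw_neg (hx : x ^ p = 1) (m : ZMod p) : pw x (-m) = (pw x m)⁻¹ :=
  eq_inv_of_mul_eq_one_left (by rw [← pw_add hx, neg_add_cancel, pw_zero])

lemma pw_congr {m n : ZMod p} (h : m = n) : pw x m = pw x n := by rw [h]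

lemma map_pw (σ : MulAut (G2 p)) (m : ZMod p) : σ (pw x m) = pw (σ x) m := map_pow σ x _

lemma pw_inv_base (m : ZMod p) : pw x⁻¹ m = (pw x m)⁻¹ := inv_pow x _

end AuxPw

section G2Facts

open scoped commutatorElement

variable {p : ℕ}

lemma G2rel_one {r : FreeGroup (Fin 3)} (h : r ∈ G2Rels p) :
    PresentedGroup.mk (G2Rels p) r = 1 :=
  (QuotientGroup.eq_one_iff _).mpr (Subgroup.subset_normalClosure h)

lemma a2_pow : a2 p ^ p = 1 := by
  have h := G2rel_one (p := p) (r := FreeGroup.of 0 ^ p) (by simp [G2Rels])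
  rw [map_pow] at h
  exact h

lemma b2_pow : b2 p ^ p = 1 := by
  have h := G2rel_one (p := p) (r := FreeGroup.of 1 ^ p) (by simp [G2Rels])
  rw [map_pow] at h
  exact h

lemma c2_pow : c2 p ^ p = 1 := by
  have h := G2rel_one (p := p) (r := FreeGroup.of 2 ^ p) (by simp [G2Rels])
  rw [map_pow] at h
  exact h

lemma comm_ac : Commute (a2 p) (c2 p) := by
  have h := G2rel_one (p := p) (r := ⁅FreeGroup.of (0 : Fin 3), FreeGroup.of 2⁆)
    (by simp [G2Rels])
  have h2 : ⁅a2 p, c2 p⁆ = 1 := by simpa [commutatorElement_def, a2, c2, PresentedGroup.of] using h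
  exact commutatorElement_eq_one_iff_commute.mp h2

lemma comm_bc : Commute (b2 p) (c2 p) := by
  have h := G2rel_one (p := p) (r := ⁅FreeGroup.of (1 : Fin 3), FreeGroup.of 2⁆)
    (by simp [G2Rels])
  have h2 : ⁅b2 p, c2 p⁆ = 1 := by simpa [commutatorElement_def, b2, c2, PresentedGroup.of] using h
  exact commutatorElement_eq_one_iff_commute.mp h2

lemma hab_rel : a2 p * b2 p * (a2 p)⁻¹ * (b2 p)⁻¹ = c2 p := by
  have h := G2rel_one (p := p)
    (r := ⁅FreeGroup.of (0 : Fin 3), FreeGroup.of 1⁆ * (FreeGroup.of 2)⁻¹) (by simp [G2Rels])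
  rw [map_mul, map_inv, mul_inv_eq_one] at h
  simpa [commutatorElement_def, a2, b2, c2, PresentedGroup.of] using h

lemma c_central (g : G2 p) : Commute (c2 p) g := by
  have hmem : g ∈ Subgroup.centralizer {c2 p} := by
    refine PresentedGroup.generated_by _ _ (fun j => ?_) g
    refine Subgroup.mem_centralizer_iff.mpr (fun z hz => ?_)
    rw [Set.mem_singleton_iff] at hz
    subst hz
    fin_cases j
    · exact comm_ac.symm.eq
    · exact comm_bc.symm.eq
    · rfl
  exact (Subgroup.mem_centralizer_iff.mp hmem _ rfl)

lemma hab2 : a2 p * b2 p = b2 p * a2 p * c2 p := by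
  have h := hab_rel (p := p)
  have h2 : a2 p * b2 p = c2 p * (b2 p * a2 p) := by
    calc a2 p * b2 p
        = (a2 p * b2 p * (a2 p)⁻¹ * (b2 p)⁻¹) * (b2 p * a2 p) := by group
      _ = c2 p * (b2 p * a2 p) := by rw [h]
  rw [h2, (c_central (b2 p * a2 p)).eq]

lemma swap1 : ∀ j : ℕ, a2 p * b2 p ^ j = b2 p ^ j * a2 p * c2 p ^ j := by
  intro j
  induction j with
  | zero => simp
  | succ j ih =>
    have hc := c_central (p := p)
    calc a2 p * b2 p ^ (j + 1)
        = (a2 p * b2 p ^ j) * b2 p := by rw [pow_succ, ← mul_assoc]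
      _ = b2 p ^ j * a2 p * c2 p ^ j * b2 p := by rw [ih]
      _ = b2 p ^ j * a2 p * (c2 p ^ j * b2 p) := by rw [mul_assoc]
      _ = b2 p ^ j * a2 p * (b2 p * c2 p ^ j) := by rw [((hc (b2 p)).pow_left j).eq]
      _ = b2 p ^ j * (a2 p * b2 p) * c2 p ^ j := by group
      _ = b2 p ^ j * (b2 p * a2 p * c2 p) * c2 p ^ j := by rw [hab2]
      _ = b2 p ^ (j + 1) * a2 p * c2 p ^ (j + 1) := by
          rw [pow_succ, pow_succ]; group

lemma swap_pow : ∀ i j : ℕ, a2 p ^ i * b2 p ^ j = b2 p ^ j * a2 p ^ i * c2 p ^ (i * j) := by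
  intro i j
  induction i with
  | zero => simp
  | succ i ih =>
    have hc := c_central (p := p)
    calc a2 p ^ (i + 1) * b2 p ^ j
        = a2 p * (a2 p ^ i * b2 p ^ j) := by rw [pow_succ']; group
      _ = a2 p * (b2 p ^ j * a2 p ^ i * c2 p ^ (i * j)) := by rw [ih]
      _ = (a2 p * b2 p ^ j) * a2 p ^ i * c2 p ^ (i * j) := by group
      _ = (b2 p ^ j * a2 p * c2 p ^ j) * a2 p ^ i * c2 p ^ (i * j) := by rw [swap1]
      _ = b2 p ^ j * a2 p * (c2 p ^ j * a2 p ^ i) * c2 p ^ (i * j) := by group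
      _ = b2 p ^ j * a2 p * (a2 p ^ i * c2 p ^ j) * c2 p ^ (i * j) := by
          rw [((hc (a2 p ^ i)).pow_left j).eq]
      _ = b2 p ^ j * a2 p ^ (i + 1) * (c2 p ^ j * c2 p ^ (i * j)) := by
          rw [pow_succ']; group
      _ = b2 p ^ j * a2 p ^ (i + 1) * c2 p ^ ((i + 1) * j) := by
          rw [← pow_add]; ring_nf

variable [NeZero p]

lemma swap_pw (m n : ZMod p) :
    pw (a2 p) m * pw (b2 p) n = pw (b2 p) n * pw (a2 p) m * pw (c2 p) (m * n) := by
  show a2 p ^ m.val * b2 p ^ n.val = b2 p ^ n.val * a2 p ^ m.val * c2 p ^ (m * n).val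
  rw [swap_pow]
  congr 1
  exact pow_zmod_congr c2_pow (by push_cast [ZMod.natCast_val, ZMod.cast_id]; ring)

lemma pw_c_comm (w : G2 p) (n : ZMod p) : pw (c2 p) n * w = w * pw (c2 p) n :=
  ((c_central w).pow_left _).eq

lemma inv_form (x y z : ZMod p) :
    (pw (a2 p) x * pw (b2 p) y * pw (c2 p) z)⁻¹ =
      pw (a2 p) (-x) * pw (b2 p) (-y) * pw (c2 p) (-z - x * y) := by
  have h1 : pw (b2 p) (-y) * pw (a2 p) (-x) =
      pw (a2 p) (-x) * pw (b2 p) (-y) * pw (c2 p) (-(x * y)) := by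
    have hs := swap_pw (p := p) (-x) (-y)
    rw [neg_mul_neg] at hs
    rw [pw_neg c2_pow]
    exact (mul_inv_eq_iff_eq_mul.mpr hs).symm
  rw [mul_inv_rev, mul_inv_rev, ← pw_neg c2_pow, ← pw_neg b2_pow, ← pw_neg a2_pow]
  calc pw (c2 p) (-z) * ((pw (b2 p) (-y)) * (pw (a2 p) (-x)))
      = pw (c2 p) (-z) * (pw (a2 p) (-x) * pw (b2 p) (-y) * pw (c2 p) (-(x * y))) := by
        rw [h1]
    _ = pw (a2 p) (-x) * pw (b2 p) (-y) * pw (c2 p) (-(x * y)) * pw (c2 p) (-z) := by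
        rw [pw_c_comm]
    _ = pw (a2 p) (-x) * pw (b2 p) (-y) * (pw (c2 p) (-(x * y)) * pw (c2 p) (-z)) := by
        rw [mul_assoc]
    _ = pw (a2 p) (-x) * pw (b2 p) (-y) * pw (c2 p) (-(x * y) + -z) := by
        rw [← pw_add c2_pow]
    _ = pw (a2 p) (-x) * pw (b2 p) (-y) * pw (c2 p) (-z - x * y) := by
        rw [pw_congr (show -(x * y) + -z = -z - x * y by ring)]

end G2Facts

/-- The assignment `a ↦ a⁻¹`, `b ↦ b⁻¹`, `c ↦ c` extends to an
automorphism `σ` of `G₂(p)` with `σ(R_{4,k}) = (R_{4,1+λ-k})⁻¹`; hence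
`σ(S_{4,k}) = S_{4,1+λ-k}` and `Γ_{4,k} ≅ Γ_{4,1+λ-k}`. -/
theorem statement12 (p : ℕ) (hp : p.Prime) (hdvd : 4 ∣ p - 1)
    (lam : (ZMod p)ˣ) (hlam : orderOf lam = 4) (k : ZMod p) :
    ∃ σ : MulAut (G2 p),
      σ (a2 p) = (a2 p)⁻¹ ∧ σ (b2 p) = (b2 p)⁻¹ ∧ σ (c2 p) = c2 p ∧
      ⇑σ '' R4 p (lam : ZMod p) k = (R4 p (lam : ZMod p) (1 + (lam : ZMod p) - k))⁻¹ ∧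
      ⇑σ '' S4 p (lam : ZMod p) k = S4 p (lam : ZMod p) (1 + (lam : ZMod p) - k) ∧
      Nonempty (Cay (G2 p) (S4 p (lam : ZMod p) k) ≃g
        Cay (G2 p) (S4 p (lam : ZMod p) (1 + (lam : ZMod p) - k))) := by
  haveI : Fact p.Prime := ⟨hp⟩
  haveI : NeZero p := ⟨hp.pos.ne'⟩
  set L : ZMod p := (lam : ZMod p) with hLdef
  -- λ² = -1
  have h4 : L ^ 4 = 1 := by
    have h := pow_orderOf_eq_one lam
    rw [hlam] at h
    have := congrArg (Units.val) h
    push_cast at this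
    exact this
  have h2 : L ^ 2 ≠ 1 := by
    intro h
    have hu : lam ^ 2 = 1 := Units.ext (by push_cast; exact h)
    have hd := orderOf_dvd_of_pow_eq_one hu
    rw [hlam] at hd
    norm_num at hd
  have hL2 : L ^ 2 = -1 := by
    have hfac : (L ^ 2 - 1) * (L ^ 2 + 1) = 0 := by linear_combination h4
    rcases mul_eq_zero.mp hfac with h | h
    · exact absurd (sub_eq_zero.mp h) h2
    · exact eq_neg_of_add_eq_zero_left h
  -- the automorphism
  have hrel : ∀ r ∈ G2Rels p,
      FreeGroup.lift (![(a2 p)⁻¹, (b2 p)⁻¹, c2 p] : Fin 3 → G2 p) r = 1 := by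
    intro r hr
    simp only [G2Rels, Set.mem_insert_iff, Set.mem_singleton_iff] at hr
    rcases hr with rfl | rfl | rfl | rfl | rfl | rfl
    · rw [map_pow, FreeGroup.lift_apply_of]
      show ((a2 p)⁻¹) ^ p = 1
      rw [inv_pow, a2_pow, inv_one]
    · rw [map_pow, FreeGroup.lift_apply_of]
      show ((b2 p)⁻¹) ^ p = 1
      rw [inv_pow, b2_pow, inv_one]
    · rw [map_pow, FreeGroup.lift_apply_of]
      show (c2 p) ^ p = 1
      exact c2_pow
    · simp only [commutatorElement, map_mul, map_inv, FreeGroup.lift_apply_of]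
      show (a2 p)⁻¹ * (b2 p)⁻¹ * ((a2 p)⁻¹)⁻¹ * ((b2 p)⁻¹)⁻¹ * (c2 p)⁻¹ = 1
      rw [inv_inv, inv_inv, mul_inv_eq_one]
      rw [mul_assoc ((a2 p)⁻¹ * (b2 p)⁻¹), hab2]
      group
    · simp only [commutatorElement_def, map_mul, map_inv, FreeGroup.lift_apply_of]
      show (a2 p)⁻¹ * (c2 p) * ((a2 p)⁻¹)⁻¹ * (c2 p)⁻¹ = 1
      exact commutatorElement_eq_one_iff_commute.mpr ((comm_ac (p := p)).inv_left)
    · simp only [commutatorElement_def, map_mul, map_inv, FreeGroup.lift_apply_of]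
      show (b2 p)⁻¹ * (c2 p) * ((b2 p)⁻¹)⁻¹ * (c2 p)⁻¹ = 1
      exact commutatorElement_eq_one_iff_commute.mpr ((comm_bc (p := p)).inv_left)
  set φ : G2 p →* G2 p := PresentedGroup.toGroup hrel with hφdef
  have hφa : φ (a2 p) = (a2 p)⁻¹ := PresentedGroup.toGroup.of hrel
  have hφb : φ (b2 p) = (b2 p)⁻¹ := PresentedGroup.toGroup.of hrel
  have hφc : φ (c2 p) = c2 p := PresentedGroup.toGroup.of hrel
  have hinv : ∀ g : G2 p, φ (φ g) = g := by
    have hcomp : φ.comp φ = MonoidHom.id (G2 p) := by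
      apply PresentedGroup.ext
      intro x
      fin_cases x
      · show φ (φ (a2 p)) = a2 p
        rw [hφa, map_inv, hφa, inv_inv]
      · show φ (φ (b2 p)) = b2 p
        rw [hφb, map_inv, hφb, inv_inv]
      · show φ (φ (c2 p)) = c2 p
        rw [hφc, hφc]
    intro g
    exact DFunLike.congr_fun hcomp g
  set σA : MulAut (G2 p) := ⟨⟨φ, φ, hinv, hinv⟩, map_mul φ⟩ with hσdef
  have hσa : σA (a2 p) = (a2 p)⁻¹ := hφa
  have hσb : σA (b2 p) = (b2 p)⁻¹ := hφb
  have hσc : σA (c2 p) = c2 p := hφc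
  have h3 : σA (pw (a2 p) L * pw (b2 p) (L - 1) * pw (c2 p) k) =
      (pw (a2 p) L * pw (b2 p) (L - 1) * pw (c2 p) (1 + L - k))⁻¹ := by
    rw [inv_form, map_mul, map_mul, map_pw, map_pw, map_pw, hσa, hσb, hσc,
      pw_inv_base, pw_inv_base, ← pw_neg a2_pow, ← pw_neg b2_pow]
    rw [show (-(1 + L - k) - L * (L - 1) : ZMod p) = k from by linear_combination -hL2]
  have h4el : σA (pw (a2 p) (-L - 1) * pw (b2 p) (-L) * pw (c2 p) (1 - k)) =
      (pw (a2 p) (-L - 1) * pw (b2 p) (-L) * pw (c2 p) (1 - (1 + L - k)))⁻¹ := by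
    rw [inv_form, map_mul, map_mul, map_pw, map_pw, map_pw, hσa, hσb, hσc,
      pw_inv_base, pw_inv_base, ← pw_neg a2_pow, ← pw_neg b2_pow]
    rw [show (-(1 - (1 + L - k)) - (-L - 1) * -L : ZMod p) = 1 - k from by
      linear_combination -hL2]
  have hR : ⇑σA '' R4 p L k = (R4 p L (1 + L - k))⁻¹ := by
    unfold R4
    rw [Set.image_insert_eq, Set.image_insert_eq, Set.image_insert_eq, Set.image_singleton,
      Set.inv_insert, Set.inv_insert, Set.inv_insert, Set.inv_singleton, hσa, hσb, h3, h4el]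
  have hS : ⇑σA '' S4 p L k = S4 p L (1 + L - k) := by
    unfold S4
    rw [Set.image_union, mulaut_image_inv, hR, inv_inv, Set.union_comm]
  have hmem : ∀ g : G2 p, σA g ∈ S4 p L (1 + L - k) ↔ g ∈ S4 p L k := by
    intro g
    rw [← hS]
    constructor
    · rintro ⟨u, hu, he⟩
      exact (σA.injective he) ▸ hu
    · intro hg
      exact ⟨g, hg, rfl⟩
  refine ⟨σA, hσa, hσb, hσc, hR, hS, ⟨?_⟩⟩
  refine ⟨σA.toEquiv, ?_⟩
  intro u v
  show (Cay (G2 p) (S4 p L (1 + L - k))).Adj (σA u) (σA v) ↔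
    (Cay (G2 p) (S4 p L k)).Adj u v
  constructor
  · rintro ⟨hne, h⟩
    refine ⟨fun he => hne (by rw [he]), ?_⟩
    rcases h with h | h
    · exact Or.inl ((hmem (v * u⁻¹)).mp (by rwa [map_mul, map_inv]))
    · exact Or.inr ((hmem (u * v⁻¹)).mp (by rwa [map_mul, map_inv]))
  · rintro ⟨hne, h⟩
    refine ⟨fun he => hne (σA.injective he), ?_⟩
    rcases h with h | h
    · refine Or.inl ?_
      rw [← map_inv, ← map_mul]
      exact (hmem _).mpr h
    · refine Or.inr ?_
      rw [← map_inv, ← map_mul]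
      exact (hmem _).mpr h
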